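/- Let A ∈ ℝ^{N×N} be Hurwitz, B ∈ ℝ^{N×M} and C ∈ ℝ^{M×N}. Then the trace of the cross Gramian satisfies tr(W_X) = ∫₀^∞ tr(C · exp(2tA) · B) dt, where W_X = ∫₀^∞ exp(tA) B C exp(tA) dt. (This integral is the trace of the Hankel operator of the system, so tr(H) = tr(W_X).) -/

import Mathlib

open MeasureTheory Matrix NormedSpace
open scoped Nat

attribute [local instance] Matrix.normedAddCommGroup Matrix.normedSpace

/-- `A` is Hurwitz: every complex eigenvalue of `A` has strictly negative real part. -/
def IsHurwitz {N : ℕ} (A : Matrix (Fin N) (Fin N) ℝ) : Prop :=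
  ∀ μ ∈ spectrum ℂ (A.map Complex.ofReal), μ.re < 0

section Aux

variable {N : ℕ}

/-- Entrywise sup norm of a product. -/
lemma aux_norm_mul_le {𝕜 : Type*} [RCLike 𝕜] {a b c : ℕ}
    (X : Matrix (Fin a) (Fin b) 𝕜) (Y : Matrix (Fin b) (Fin c) 𝕜) :
    ‖X * Y‖ ≤ (b : ℝ) * ‖X‖ * ‖Y‖ := by
  have h0 : (0:ℝ) ≤ (b : ℝ) * ‖X‖ * ‖Y‖ := by positivity
  rw [Matrix.norm_le_iff h0]
  intro i j
  calc ‖(X * Y) i j‖ = ‖∑ k, X i k * Y k j‖ := by rw [Matrix.mul_apply]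
    _ ≤ ∑ k, ‖X i k * Y k j‖ := norm_sum_le _ _
    _ ≤ ∑ _k : Fin b, ‖X‖ * ‖Y‖ := by
        refine Finset.sum_le_sum fun k _ => ?_
        rw [norm_mul]
        exact mul_le_mul (Matrix.norm_entry_le_entrywise_sup_norm X)
          (Matrix.norm_entry_le_entrywise_sup_norm Y) (norm_nonneg _) (norm_nonneg _)
    _ = (b : ℝ) * ‖X‖ * ‖Y‖ := by
        simp [Finset.sum_const, Finset.card_univ, mul_assoc]

/-- `X ↦ X *ᵥ v` as a continuous linear map. -/
noncomputable def mulVecCLM (v : Fin N → ℂ) :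
    Matrix (Fin N) (Fin N) ℂ →L[ℂ] (Fin N → ℂ) :=
  LinearMap.toContinuousLinearMap
    { toFun := fun X => X *ᵥ v
      map_add' := fun X Y => Matrix.add_mulVec X Y v
      map_smul' := fun c X => Matrix.smul_mulVec c X v }

@[simp] lemma mulVecCLM_apply (v : Fin N → ℂ) (X : Matrix (Fin N) (Fin N) ℂ) :
    mulVecCLM v X = X *ᵥ v := rfl

lemma aux_expSummable (X : Matrix (Fin N) (Fin N) ℂ) :
    Summable fun n : ℕ => ((n !:ℂ))⁻¹ • X ^ n := by
  letI : SeminormedRing (Matrix (Fin N) (Fin N) ℂ) := Matrix.linftyOpSemiNormedRing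
  letI : NormedRing (Matrix (Fin N) (Fin N) ℂ) := Matrix.linftyOpNormedRing
  letI : NormedAlgebra ℂ (Matrix (Fin N) (Fin N) ℂ) := Matrix.linftyOpNormedAlgebra
  open scoped Matrix.Norms.Operator in
  exact NormedSpace.expSeries_summable' X

lemma aux_exp_mulVec_trunc (Mn : Matrix (Fin N) (Fin N) ℂ) (v : Fin N → ℂ) (K : ℕ)
    (hv : Mn ^ K *ᵥ v = 0) (t : ℝ) :
    exp ((t:ℂ) • Mn) *ᵥ v
      = ∑ k ∈ Finset.range K, ((t:ℂ) ^ k * ((k !:ℂ))⁻¹) • (Mn ^ k *ᵥ v) := by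
  have hs := aux_expSummable ((t:ℂ) • Mn)
  have h1 : exp ((t:ℂ) • Mn) *ᵥ v
      = ∑' n : ℕ, (((n !:ℂ))⁻¹ • ((t:ℂ) • Mn) ^ n) *ᵥ v := by
    rw [exp_eq_tsum ℂ]
    exact ((mulVecCLM v).map_tsum hs)
  have h2 : ∀ n : ℕ, (((n !:ℂ))⁻¹ • ((t:ℂ) • Mn) ^ n) *ᵥ v
      = ((t:ℂ) ^ n * ((n !:ℂ))⁻¹) • (Mn ^ n *ᵥ v) := by
    intro n
    rw [smul_pow, smul_smul, Matrix.smul_mulVec, mul_comm]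
  rw [h1]
  rw [tsum_eq_sum (s := Finset.range K) ?_]
  · exact Finset.sum_congr rfl fun k _ => h2 k
  · intro n hn
    have hK : K ≤ n := by
      by_contra h
      exact hn (Finset.mem_range.mpr (by omega))
    rw [h2 n]
    have : Mn ^ n *ᵥ v = 0 := by
      rw [show n = (n - K) + K by omega, pow_add, ← Matrix.mulVec_mulVec, hv,
        Matrix.mulVec_zero]
    rw [this, smul_zero]

lemma aux_exp_smul_one (z : ℂ) :
    exp (z • (1 : Matrix (Fin N) (Fin N) ℂ)) = Complex.exp z • 1 := by
  letI : SeminormedRing (Matrix (Fin N) (Fin N) ℂ) := Matrix.linftyOpSemiNormedRing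
  letI : NormedRing (Matrix (Fin N) (Fin N) ℂ) := Matrix.linftyOpNormedRing
  letI : NormedAlgebra ℂ (Matrix (Fin N) (Fin N) ℂ) := Matrix.linftyOpNormedAlgebra
  have h1 : Continuous (algebraMap ℂ (Matrix (Fin N) (Fin N) ℂ)) := by
    have : (fun z : ℂ => algebraMap ℂ (Matrix (Fin N) (Fin N) ℂ) z)
        = fun z : ℂ => z • (1 : Matrix (Fin N) (Fin N) ℂ) := by
      funext z; rw [Algebra.algebraMap_eq_smul_one]
    rw [show (algebraMap ℂ (Matrix (Fin N) (Fin N) ℂ) : ℂ → Matrix (Fin N) (Fin N) ℂ)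
      = fun z : ℂ => z • (1 : Matrix (Fin N) (Fin N) ℂ) from this]
    exact continuous_id.smul continuous_const
  calc exp (z • (1 : Matrix (Fin N) (Fin N) ℂ))
      = exp (algebraMap ℂ (Matrix (Fin N) (Fin N) ℂ) z) := by
        rw [Algebra.algebraMap_eq_smul_one]
    _ = algebraMap ℂ (Matrix (Fin N) (Fin N) ℂ) (exp z) :=
        (map_exp (algebraMap ℂ (Matrix (Fin N) (Fin N) ℂ)) h1 z).symm
    _ = Complex.exp z • 1 := by
        rw [Algebra.algebraMap_eq_smul_one, Complex.exp_eq_exp_ℂ]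

lemma aux_decay_on_genEig {Ac : Matrix (Fin N) (Fin N) ℂ} {μ : ℂ} {v : Fin N → ℂ} {K : ℕ}
    (hv : (Ac - μ • 1) ^ K *ᵥ v = 0) {ε : ℝ} (hε : 0 < ε) :
    ∃ D, 0 ≤ D ∧ ∀ t : ℝ, 0 ≤ t →
      ‖exp ((t:ℂ) • Ac) *ᵥ v‖ ≤ D * Real.exp ((μ.re + ε) * t) := by
  set Mn := Ac - μ • 1 with hMn
  refine ⟨∑ k ∈ Finset.range K, ε⁻¹ ^ k * ‖Mn ^ k *ᵥ v‖, by positivity, fun t ht => ?_⟩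
  have expand : exp ((t:ℂ) • Ac) = Complex.exp ((t:ℂ) * μ) • exp ((t:ℂ) • Mn) := by
    have comm : Commute ((t:ℂ) • (μ • (1 : Matrix (Fin N) (Fin N) ℂ))) ((t:ℂ) • Mn) :=
      (((Commute.one_left Mn).smul_left μ).smul_left (t:ℂ)).smul_right (t:ℂ)
    have hsplit : (t:ℂ) • Ac = (t:ℂ) • (μ • (1 : Matrix (Fin N) (Fin N) ℂ)) + (t:ℂ) • Mn := by
      rw [← smul_add]
      congr 1
      rw [hMn]
      abel
    rw [hsplit, Matrix.exp_add_of_commute _ _ comm, smul_smul, aux_exp_smul_one,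
      Matrix.smul_mul, one_mul]
  rw [expand, Matrix.smul_mulVec, norm_smul, Complex.norm_exp]
  have hre : ((t:ℂ) * μ).re = μ.re * t := by
    simp [Complex.mul_re]; ring
  rw [hre, aux_exp_mulVec_trunc Mn v K hv t]
  have key : ∀ k : ℕ, ‖(t:ℂ) ^ k * ((k !:ℂ))⁻¹‖ ≤ ε⁻¹ ^ k * Real.exp (ε * t) := by
    intro k
    have h1 : ‖(t:ℂ) ^ k * ((k !:ℂ))⁻¹‖ = t ^ k * ((k !:ℝ))⁻¹ := by
      rw [norm_mul, norm_pow, Complex.norm_real, Real.norm_of_nonneg ht, norm_inv]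
      congr 2
      rw [Complex.norm_natCast]
    have hmain : ε⁻¹ ^ k * (ε * t) ^ k = t ^ k := by
      rw [mul_pow, ← mul_assoc, ← mul_pow, inv_mul_cancel₀ hε.ne', one_pow, one_mul]
    have h3 : (ε * t) ^ k / (k !:ℝ) ≤ Real.exp (ε * t) := by
      refine le_trans ?_ (Real.sum_le_exp_of_nonneg (mul_nonneg hε.le ht) (k + 1))
      exact Finset.single_le_sum (f := fun i => (ε * t) ^ i / (i !:ℝ))
        (fun i _ => by positivity) (Finset.self_mem_range_succ k)
    calc ‖(t:ℂ) ^ k * ((k !:ℂ))⁻¹‖ = t ^ k * ((k !:ℝ))⁻¹ := h1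
      _ = (ε⁻¹ ^ k * (ε * t) ^ k) * ((k !:ℝ))⁻¹ := by rw [hmain]
      _ = ε⁻¹ ^ k * ((ε * t) ^ k / (k !:ℝ)) := by rw [mul_assoc, div_eq_mul_inv]
      _ ≤ ε⁻¹ ^ k * Real.exp (ε * t) := by
          exact mul_le_mul_of_nonneg_left h3 (by positivity)
  calc Real.exp (μ.re * t) * ‖∑ k ∈ Finset.range K, ((t:ℂ) ^ k * ((k !:ℂ))⁻¹) • (Mn ^ k *ᵥ v)‖
      ≤ Real.exp (μ.re * t) *
          ∑ k ∈ Finset.range K, (ε⁻¹ ^ k * ‖Mn ^ k *ᵥ v‖) * Real.exp (ε * t) := by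
        refine mul_le_mul_of_nonneg_left ?_ (Real.exp_pos _).le
        refine (norm_sum_le _ _).trans (Finset.sum_le_sum fun k _ => ?_)
        rw [norm_smul]
        calc ‖(t:ℂ) ^ k * ((k !:ℂ))⁻¹‖ * ‖Mn ^ k *ᵥ v‖
            ≤ (ε⁻¹ ^ k * Real.exp (ε * t)) * ‖Mn ^ k *ᵥ v‖ :=
              mul_le_mul_of_nonneg_right (key k) (norm_nonneg _)
          _ = (ε⁻¹ ^ k * ‖Mn ^ k *ᵥ v‖) * Real.exp (ε * t) := by ring
    _ = (∑ k ∈ Finset.range K, ε⁻¹ ^ k * ‖Mn ^ k *ᵥ v‖) * Real.exp ((μ.re + ε) * t) := by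
        rw [← Finset.sum_mul, add_mul, Real.exp_add]
        ring


lemma aux_exp_map_ofReal {N : ℕ} (A : Matrix (Fin N) (Fin N) ℝ) (t : ℝ) :
    (exp (t • A)).map Complex.ofReal = exp ((t:ℂ) • A.map Complex.ofReal) := by
  letI : SeminormedRing (Matrix (Fin N) (Fin N) ℝ) := Matrix.linftyOpSemiNormedRing
  letI : NormedRing (Matrix (Fin N) (Fin N) ℝ) := Matrix.linftyOpNormedRing
  letI : NormedAlgebra ℝ (Matrix (Fin N) (Fin N) ℝ) := Matrix.linftyOpNormedAlgebra
  letI : SeminormedRing (Matrix (Fin N) (Fin N) ℂ) := Matrix.linftyOpSemiNormedRing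
  letI : NormedRing (Matrix (Fin N) (Fin N) ℂ) := Matrix.linftyOpNormedRing
  letI : NormedAlgebra ℝ (Matrix (Fin N) (Fin N) ℂ) := Matrix.linftyOpNormedAlgebra
  letI : NormedAlgebra ℂ (Matrix (Fin N) (Fin N) ℂ) := Matrix.linftyOpNormedAlgebra
  set Phi : Matrix (Fin N) (Fin N) ℝ →ₐ[ℝ] Matrix (Fin N) (Fin N) ℂ :=
    AlgHom.mapMatrix Complex.ofRealAm with hPhidef
  have hPhi : Continuous Phi := by
    have h : (Phi : Matrix (Fin N) (Fin N) ℝ → Matrix (Fin N) (Fin N) ℂ)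
        = fun X => X.map Complex.ofReal := by
      funext X; rfl
    rw [h]
    exact continuous_id.matrix_map Complex.continuous_ofReal
  open scoped Matrix.Norms.Operator in
  have h1 := map_exp Phi hPhi (t • A)
  have h2 : Phi (t • A) = (t:ℂ) • A.map Complex.ofReal := by
    ext i j
    simp [hPhidef, AlgHom.mapMatrix_apply, Matrix.map_apply, Complex.real_smul]
  have h3 : Phi (exp (t • A)) = (exp (t • A)).map Complex.ofReal := rfl
  rw [h2] at h1
  exact h1

lemma aux_hurwitz_decay {N : ℕ} (A : Matrix (Fin N) (Fin N) ℝ) (hA : IsHurwitz A) :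
    ∃ c δ : ℝ, 0 < δ ∧ 0 ≤ c ∧ ∀ t : ℝ, 0 ≤ t → ‖exp (t • A)‖ ≤ c * Real.exp (-δ * t) := by
  classical
  set Ac := A.map Complex.ofReal with hAc
  -- a uniform spectral gap
  have hfin : (spectrum ℂ Ac).Finite := Matrix.finite_spectrum Ac
  set T : Set ℝ := insert (-1 : ℝ) (Complex.re '' spectrum ℂ Ac) with hT
  have hTfin : T.Finite := (hfin.image Complex.re).insert _
  have hTne : T.Nonempty := ⟨-1, Set.mem_insert _ _⟩
  have hub : ∀ x ∈ T, x ≤ sSup T := fun x hx => le_csSup hTfin.bddAbove hx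
  have hsup_neg : sSup T < 0 := by
    rcases hTne.csSup_mem hTfin with h | ⟨μ, hμ, hμe⟩
    · rw [h]; norm_num
    · rw [← hμe]; exact hA μ hμ
  set δ : ℝ := -sSup T / 2 with hδdef
  have hδ : 0 < δ := by rw [hδdef]; linarith
  have hgap : ∀ μ ∈ spectrum ℂ Ac, μ.re + δ ≤ -δ := by
    intro μ hμ
    have := hub μ.re (Set.mem_insert_of_mem _ ⟨μ, hμ, rfl⟩)
    rw [hδdef]; linarith
  -- the submodule of initial vectors with decay
  set f : Module.End ℂ (Fin N → ℂ) := Matrix.toLinAlgEquiv' Ac with hf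
  let p : Submodule ℂ (Fin N → ℂ) :=
    { carrier := {x | ∃ C, 0 ≤ C ∧ ∀ t : ℝ, 0 ≤ t →
        ‖exp ((t:ℂ) • Ac) *ᵥ x‖ ≤ C * Real.exp (-δ * t)}
      add_mem' := by
        rintro x y ⟨Cx, hCx0, hCx⟩ ⟨Cy, hCy0, hCy⟩
        refine ⟨Cx + Cy, by positivity, fun t ht => ?_⟩
        rw [Matrix.mulVec_add, add_mul]
        exact (norm_add_le _ _).trans (add_le_add (hCx t ht) (hCy t ht))
      zero_mem' := ⟨0, le_refl _, fun t ht => by rw [Matrix.mulVec_zero]; simp⟩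
      smul_mem' := by
        rintro c x ⟨C, hC0, hC⟩
        refine ⟨‖c‖ * C, by positivity, fun t ht => ?_⟩
        rw [Matrix.mulVec_smul, norm_smul, mul_assoc]
        exact mul_le_mul_of_nonneg_left (hC t ht) (norm_nonneg _) }
  have hle : ∀ μ : ℂ, f.maxGenEigenspace μ ≤ p := by
    intro μ
    by_cases hbot : f.maxGenEigenspace μ = ⊥
    · rw [hbot]; exact bot_le
    · have heig : f.HasEigenvalue μ := by
        rw [Module.End.maxGenEigenspace_eq] at hbot
        exact Module.End.hasEigenvalue_of_hasGenEigenvalue hbot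
      have hspec : μ ∈ spectrum ℂ Ac := by
        have h := heig.mem_spectrum
        rwa [hf, AlgEquiv.spectrum_eq] at h
      intro v hv
      rw [Module.End.mem_maxGenEigenspace] at hv
      obtain ⟨k, hk⟩ := hv
      have hk' : (Ac - μ • 1) ^ k *ᵥ v = 0 := by
        have hend : (f - μ • (1 : Module.End ℂ (Fin N → ℂ))) ^ k
            = Matrix.toLinAlgEquiv' ((Ac - μ • 1) ^ k) := by
          rw [map_pow, map_sub, _root_.map_smul, _root_.map_one, hf]
        rw [hend] at hk
        rwa [Matrix.toLinAlgEquiv'_apply] at hk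
      obtain ⟨D, hD0, hD⟩ := aux_decay_on_genEig hk' hδ
      refine ⟨D, hD0, fun t ht => ?_⟩
      refine (hD t ht).trans ?_
      refine mul_le_mul_of_nonneg_left (Real.exp_le_exp.mpr ?_) hD0
      exact mul_le_mul_of_nonneg_right (hgap μ hspec) ht
  have htop : ∀ x : Fin N → ℂ, x ∈ p := by
    have h1 : (⊤ : Submodule ℂ (Fin N → ℂ)) ≤ p := by
      rw [← Module.End.iSup_maxGenEigenspace_eq_top f]
      exact iSup_le hle
    exact fun x => h1 Submodule.mem_top
  choose Cf hCf0 hCf using fun j : Fin N => htop (Pi.single j 1)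
  refine ⟨∑ j, Cf j, δ, hδ, Finset.sum_nonneg fun j _ => hCf0 j, fun t ht => ?_⟩
  have hnorm : ‖exp (t • A)‖ = ‖exp ((t:ℂ) • Ac)‖ := by
    rw [← aux_exp_map_ofReal A t]
    exact (Matrix.norm_map_eq _ _ fun a => Complex.norm_real a).symm
  rw [hnorm]
  have h0 : (0:ℝ) ≤ (∑ j, Cf j) * Real.exp (-δ * t) :=
    mul_nonneg (Finset.sum_nonneg fun j _ => hCf0 j) (Real.exp_pos _).le
  rw [Matrix.norm_le_iff h0]
  intro i j
  have hentry : exp ((t:ℂ) • Ac) i j = (exp ((t:ℂ) • Ac) *ᵥ Pi.single j 1) i := by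
    rw [Matrix.mulVec_single]
    simp
  calc ‖exp ((t:ℂ) • Ac) i j‖ = ‖(exp ((t:ℂ) • Ac) *ᵥ Pi.single j 1) i‖ := by rw [hentry]
    _ ≤ ‖exp ((t:ℂ) • Ac) *ᵥ Pi.single j 1‖ := norm_le_pi_norm _ i
    _ ≤ Cf j * Real.exp (-δ * t) := hCf j t ht
    _ ≤ (∑ j, Cf j) * Real.exp (-δ * t) := by
        exact mul_le_mul_of_nonneg_right
          (Finset.single_le_sum (fun j _ => hCf0 j) (Finset.mem_univ j)) (Real.exp_pos _).le

end Aux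

/-- The trace of the cross Gramian equals the trace of the Hankel operator:
`tr(W_X) = ∫₀^∞ tr(C exp(2tA) B) dt`. -/
theorem trace_crossGramian_eq_trace_hankel {N M : ℕ}
    (A : Matrix (Fin N) (Fin N) ℝ) (B : Matrix (Fin N) (Fin M) ℝ)
    (C : Matrix (Fin M) (Fin N) ℝ) (hA : IsHurwitz A) :
    (∫ t in Set.Ioi (0 : ℝ), exp (t • A) * B * C * exp (t • A)).trace =
      ∫ t in Set.Ioi (0 : ℝ), (C * exp ((2 * t) • A) * B).trace := by
  obtain ⟨c, δ, hδ, hc0, hbound⟩ := aux_hurwitz_decay A hA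
  set F : ℝ → Matrix (Fin N) (Fin N) ℝ :=
    fun t => exp (t • A) * B * C * exp (t • A) with hF
  have hcont : Continuous fun t : ℝ => exp (t • A) := by
    letI : SeminormedRing (Matrix (Fin N) (Fin N) ℝ) := Matrix.linftyOpSemiNormedRing
    letI : NormedRing (Matrix (Fin N) (Fin N) ℝ) := Matrix.linftyOpNormedRing
    letI : NormedAlgebra ℝ (Matrix (Fin N) (Fin N) ℝ) := Matrix.linftyOpNormedAlgebra
    open scoped Matrix.Norms.Operator in
    exact NormedSpace.exp_continuous.comp (continuous_id.smul continuous_const)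
  have hFcont : Continuous F :=
    ((hcont.matrix_mul continuous_const).matrix_mul continuous_const).matrix_mul hcont
  set K : ℝ := (N:ℝ) * ((M:ℝ) * ((N:ℝ) * c * ‖B‖) * ‖C‖) * c with hK
  have hFle : ∀ t : ℝ, 0 ≤ t → ‖F t‖ ≤ K * Real.exp (-δ * t) := by
    intro t ht
    set X : Matrix (Fin N) (Fin N) ℝ := exp (t • A) with hX
    have he : ‖X‖ ≤ c * Real.exp (-δ * t) := hbound t ht
    have hXc : ‖X‖ ≤ c := by
      have h1 : Real.exp (-δ * t) ≤ 1 := by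
        rw [Real.exp_le_one_iff]
        nlinarith
      nlinarith [norm_nonneg X]
    have b1 : ‖X * B‖ ≤ (N:ℝ) * c * ‖B‖ := by
      refine (aux_norm_mul_le X B).trans ?_
      gcongr
    have b2 : ‖X * B * C‖ ≤ (M:ℝ) * ((N:ℝ) * c * ‖B‖) * ‖C‖ := by
      refine (aux_norm_mul_le (X * B) C).trans ?_
      gcongr
    calc ‖F t‖ ≤ (N:ℝ) * ‖X * B * C‖ * ‖X‖ := aux_norm_mul_le (X * B * C) X
      _ ≤ (N:ℝ) * ((M:ℝ) * ((N:ℝ) * c * ‖B‖) * ‖C‖) * (c * Real.exp (-δ * t)) := by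
          gcongr
      _ = K * Real.exp (-δ * t) := by rw [hK]; ring
  have hg : IntegrableOn (fun t : ℝ => K * Real.exp (-δ * t)) (Set.Ioi 0) :=
    (exp_neg_integrableOn_Ioi 0 hδ).const_mul K
  letI : ContinuousENorm (Matrix (Fin N) (Fin N) ℝ) :=
    { toENorm := SeminormedAddGroup.toContinuousENorm.toENorm
      continuous_enorm := SeminormedAddGroup.toContinuousENorm.continuous_enorm }
  haveI : TopologicalSpace.PseudoMetrizableSpace (Matrix (Fin N) (Fin N) ℝ) :=
    inferInstanceAs (TopologicalSpace.PseudoMetrizableSpace (Fin N → Fin N → ℝ))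
  have hFint : IntegrableOn F (Set.Ioi 0) := by
    refine Integrable.mono' hg hFcont.aestronglyMeasurable ?_
    filter_upwards [ae_restrict_mem measurableSet_Ioi] with t ht
    exact hFle t (le_of_lt ht)
  set Tr : Matrix (Fin N) (Fin N) ℝ →L[ℝ] ℝ :=
    LinearMap.toContinuousLinearMap (Matrix.traceLinearMap (Fin N) ℝ ℝ) with hTrdef
  have hswap := ContinuousLinearMap.integral_comp_comm Tr hFint
  have hTr : ∀ X : Matrix (Fin N) (Fin N) ℝ, Tr X = X.trace := fun X => rfl
  have hpt : ∀ t : ℝ, (F t).trace = (C * exp ((2 * t) • A) * B).trace := by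
    intro t
    have h2t : exp (t • A) * exp (t • A) = exp ((2 * t) • A) := by
      rw [← Matrix.exp_add_of_commute _ _ (Commute.refl (t • A))]
      congr 1
      rw [two_mul, add_smul]
    calc (exp (t • A) * B * C * exp (t • A)).trace
        = (exp (t • A) * (exp (t • A) * B * C)).trace := Matrix.trace_mul_comm _ _
      _ = ((exp ((2 * t) • A) * B) * C).trace := by rw [← Matrix.mul_assoc, ← Matrix.mul_assoc, h2t]
      _ = (C * (exp ((2 * t) • A) * B)).trace := Matrix.trace_mul_comm _ _
      _ = (C * exp ((2 * t) • A) * B).trace := by rw [← Matrix.mul_assoc]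
  calc (∫ t in Set.Ioi (0:ℝ), F t).trace
      = ∫ t in Set.Ioi (0:ℝ), (F t).trace := hswap.symm
    _ = ∫ t in Set.Ioi (0:ℝ), (C * exp ((2 * t) • A) * B).trace :=
        integral_congr_ae (Filter.Eventually.of_forall fun t => hpt t)
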